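/- The algebra R = F₂⟨a,b,c⟩/⟨1+c(1+ab)+ac(1+ba), (1+ba)c, (1+ab)c − 1, (1+ba)ac − 1⟩ admits no finite-dimensional representation: there is no unital F₂-algebra homomorphism R → Matₙ(F₂) for any n ≥ 1. -/

import Mathlib

section
local notation "a" => FreeAlgebra.ι (ZMod 2) (0 : Fin 3)
local notation "b" => FreeAlgebra.ι (ZMod 2) (1 : Fin 3)
local notation "c" => FreeAlgebra.ι (ZMod 2) (2 : Fin 3)

/-- The defining relations of the algebra `R` from the paper. -/
inductive RRel : FreeAlgebra (ZMod 2) (Fin 3) → FreeAlgebra (ZMod 2) (Fin 3) → Prop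
  | r1 : RRel (1 + c * (1 + a * b) + a * c * (1 + b * a)) 0
  | r2 : RRel ((1 + b * a) * c) 0
  | r3 : RRel ((1 + a * b) * c) 1
  | r4 : RRel ((1 + b * a) * (a * c)) 1
end

/-- The algebra `R` admits no finite-dimensional representation: there is no
unital 𝔽₂-algebra homomorphism `R → Matₙ(𝔽₂)` for any `n ≥ 1`. -/
theorem R_no_finite_dimensional_rep :
    ∀ n : ℕ, 1 ≤ n →
      IsEmpty (RingQuot RRel →ₐ[ZMod 2] Matrix (Fin n) (Fin n) (ZMod 2)) := by
  intro n hn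
  haveI : NeZero n := ⟨by omega⟩
  constructor
  intro φ
  set ψ := φ.comp (RingQuot.mkAlgHom (ZMod 2) RRel) with hψ
  have key : ∀ x y, RRel x y → ψ x = ψ y := by
    intro x y h
    simp only [hψ, AlgHom.comp_apply, RingQuot.mkAlgHom_rel _ h]
  set A := ψ (FreeAlgebra.ι (ZMod 2) (0 : Fin 3)) with hA
  set B := ψ (FreeAlgebra.ι (ZMod 2) (1 : Fin 3)) with hB
  set C := ψ (FreeAlgebra.ι (ZMod 2) (2 : Fin 3)) with hC
  have h1 := key _ _ RRel.r1
  have h3 := key _ _ RRel.r3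
  have h4 := key _ _ RRel.r4
  simp only [map_add, map_mul, map_one, map_zero, ← hA, ← hB, ← hC] at h1 h3 h4
  -- right inverses in matrix rings are two-sided
  rw [mul_eq_one_comm] at h3 h4
  -- h3 : C * (1 + A * B) = 1,  h4 : A * C * (1 + B * A) = 1
  rw [h3, h4] at h1
  -- h1 : 1 + 1 + 1 = 0 in a char-2 matrix ring
  have htwo : (1 : Matrix (Fin n) (Fin n) (ZMod 2)) + 1 = 0 := by
    have h : ((1 : ZMod 2) + 1) = 0 := by decide
    calc (1 : Matrix (Fin n) (Fin n) (ZMod 2)) + 1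
        = algebraMap (ZMod 2) _ (1 + 1) := by simp
      _ = 0 := by rw [h, map_zero]
  rw [htwo, zero_add] at h1
  exact one_ne_zero h1
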